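/- Let D ⊂ ℂ be a domain, f holomorphic on D, z₀ ∈ D, and a ∈ ∂D with |z₀ − a| = dist(z₀, ∂D). Suppose liminf |(z − a) f(z)| > 0 as z → a along the half-open segment [z₀, a) = {z₀ + t(a − z₀) : 0 ≤ t < 1} (which is contained in D). Then the radius of convergence of the Taylor series of f at z₀ is exactly dist(z₀, ∂D). -/

import Mathlib

open Complex Metric MeasureTheory Filter Set

/-- The circle mean of an `EReal`-valued function `u` over the circle of
center `z` and radius `r`, defined as the decreasing limit of the means of
the truncations `max u (-n)`. -/
noncomputable def circleMeanE (u : ℂ → EReal) (z : ℂ) (r : ℝ) : EReal :=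
  ⨅ n : ℕ, (((1 / (2 * Real.pi)) * ∫ θ in (0:ℝ)..(2 * Real.pi),
    (max (u (z + r * Complex.exp (θ * Complex.I))) ((-(n:ℝ) : ℝ) : EReal)).toReal : ℝ) : EReal)

/-- `u` is subharmonic on `U`: upper semicontinuous and satisfying the
sub-mean value inequality on every closed disc contained in `U`. -/
def SubharmonicOn (u : ℂ → EReal) (U : Set ℂ) : Prop :=
  UpperSemicontinuousOn u U ∧
  ∀ z ∈ U, ∀ r : ℝ, 0 < r → closedBall z r ⊆ U → u z ≤ circleMeanE u z r

/-- `u` is plurisubharmonic on `Ω`: upper semicontinuous, not identically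
`-∞` on any connected component, and subharmonic on every complex line. -/
def PlurisubharmonicOn {E : Type*} [NormedAddCommGroup E] [NormedSpace ℂ E]
    (u : E → EReal) (Ω : Set E) : Prop :=
  UpperSemicontinuousOn u Ω ∧
  (∀ z ∈ Ω, ∃ w ∈ connectedComponentIn Ω z, u w ≠ ⊥) ∧
  ∀ a b : E, SubharmonicOn (fun t : ℂ => u (a + t • b)) {t : ℂ | a + t • b ∈ Ω}

/-- `S` is complete pluripolar in `Ω` if there is a plurisubharmonic function
on `Ω` whose `-∞`-set is exactly `S`. -/
def CompletePluripolarIn {E : Type*} [NormedAddCommGroup E] [NormedSpace ℂ E]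
    (S Ω : Set E) : Prop :=
  ∃ u : E → EReal, PlurisubharmonicOn u Ω ∧ {z ∈ Ω | u z = ⊥} = S

/-- The pluripolar hull of `K` in `Ω`. -/
def pluripolarHull {E : Type*} [NormedAddCommGroup E] [NormedSpace ℂ E]
    (K Ω : Set E) : Set E :=
  {z ∈ Ω | ∀ u : E → EReal, PlurisubharmonicOn u Ω → (∀ w ∈ K, u w = ⊥) → u z = ⊥}

/-- Harmonic measure of `S ⊆ ∂G` for the domain `G` at the point `z`,
via the Perron method. -/
noncomputable def harmonicMeasure (z : ℂ) (S G : Set ℂ) : EReal :=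
  sSup {t : EReal | ∃ v : ℂ → EReal, SubharmonicOn v G ∧ (∀ w ∈ G, v w ≤ 0) ∧
    (∀ ζ ∈ frontier G \ S, Filter.limsup v (nhdsWithin ζ G) ≤ -1) ∧ t = v z} + 1

/-- `f`, holomorphic on `D`, extends holomorphically across the boundary
point `b` if there are an open neighborhood `V` of `b` and a holomorphic `g`
on `V` agreeing with `f` on some connected component of `V ∩ D`. -/
def ExtendsAcross (f : ℂ → ℂ) (D : Set ℂ) (b : ℂ) : Prop :=
  ∃ V : Set ℂ, IsOpen V ∧ b ∈ V ∧ ∃ g : ℂ → ℂ, DifferentiableOn ℂ g V ∧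
    ∃ z ∈ V ∩ D, Set.EqOn f g (connectedComponentIn (V ∩ D) z)

/-- The radius of convergence of the power series with coefficients `d`. -/
noncomputable def radiusOfConvergence (d : ℕ → ℂ) : ENNReal :=
  ⨆ (r : NNReal) (_ : ∃ C : ℝ, ∀ n : ℕ, ‖d n‖ * (r : ℝ) ^ n ≤ C), (r : ENNReal)

open Topology

-- aux lemma 1: ball within infDist to frontier is inside the open set
lemma aux_ball_subset {D : Set ℂ} (hDo : IsOpen D) {z₀ : ℂ} (hz₀ : z₀ ∈ D) :
    ball z₀ (Metric.infDist z₀ (frontier D)) ⊆ D := by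
  set R := Metric.infDist z₀ (frontier D) with hR
  intro w hw
  by_contra hwD
  have hseg : segment ℝ z₀ w ⊆ ball z₀ R :=
    (convex_ball z₀ R).segment_subset (mem_ball_self (by
      calc (0:ℝ) ≤ dist w z₀ := dist_nonneg
      _ < R := by simpa [mem_ball] using hw) ) hw
  have hfr : ∃ y ∈ segment ℝ z₀ w, y ∈ frontier D := by
    by_cases hcl : w ∈ closure D
    · exact ⟨w, right_mem_segment _ _ _, ⟨hcl, by rwa [hDo.interior_eq]⟩⟩
    · by_contra hno
      push_neg at hno
      have hsub : segment ℝ z₀ w ⊆ D ∪ (closure D)ᶜ := by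
        intro y hy
        by_cases hyc : y ∈ closure D
        · left
          by_contra hyD
          exact hno y hy ⟨hyc, by rwa [hDo.interior_eq]⟩
        · exact Or.inr hyc
      obtain ⟨y, _, hyD, hyc⟩ := (convex_segment z₀ w).isPreconnected D (closure D)ᶜ
        hDo isClosed_closure.isOpen_compl hsub
        ⟨z₀, left_mem_segment _ _ _, hz₀⟩ ⟨w, right_mem_segment _ _ _, hcl⟩
      exact hyc (subset_closure hyD)
  obtain ⟨y, hy, hyf⟩ := hfr
  have h1 : R ≤ dist z₀ y := Metric.infDist_le_dist_of_mem hyf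
  have h2 : dist y z₀ < R := by simpa [mem_ball] using hseg hy
  rw [dist_comm] at h2
  exact absurd h1 (not_le.mpr h2)

-- aux lemma 2: coefficients of a power series of f at z₀
lemma aux_coeff {f : ℂ → ℂ} {p : FormalMultilinearSeries ℂ ℂ ℂ} {z₀ : ℂ} {r : ENNReal}
    (h : HasFPowerSeriesOnBall f p z₀ r) (n : ℕ) :
    p.coeff n = iteratedDeriv n f z₀ / (n.factorial : ℂ) := by
  have h1 := h.factorial_smul (1 : ℂ) n
  have h2 : iteratedDeriv n f z₀ = iteratedFDeriv ℂ n f z₀ (fun _ => 1) := by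
    rw [iteratedDeriv_eq_iteratedFDeriv]
  rw [← h2] at h1
  have h3 : p n (fun _ => (1:ℂ)) = p.coeff n := rfl
  rw [h3] at h1
  rw [← h1, nsmul_eq_mul, mul_div_cancel_left₀ _ (by exact_mod_cast n.factorial_ne_zero)]


/-- If `liminf |(z - a) f z| > 0` along the segment from
`z₀` to a nearest boundary point `a`, then the radius of convergence of the
Taylor series of `f` at `z₀` is exactly `dist(z₀, ∂D)`. -/
theorem radius_eq_dist_of_liminf_pos
    (D : Set ℂ) (hDo : IsOpen D) (hDc : IsConnected D)
    (f : ℂ → ℂ) (hf : DifferentiableOn ℂ f D)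
    (z₀ : ℂ) (hz₀ : z₀ ∈ D) (a : ℂ) (ha : a ∈ frontier D)
    (hd : dist z₀ a = Metric.infDist z₀ (frontier D))
    (hlim : 0 < Filter.liminf (fun z => ‖(z - a) * f z‖)
      (nhdsWithin a ((fun t : ℝ => z₀ + t • (a - z₀)) '' Set.Ico 0 1))) :
    radiusOfConvergence (fun k => iteratedDeriv k f z₀ / (k.factorial : ℂ)) =
      ENNReal.ofReal (Metric.infDist z₀ (frontier D)) := by
  set R := Metric.infDist z₀ (frontier D) with hRdef
  set d : ℕ → ℂ := fun k => iteratedDeriv k f z₀ / (k.factorial : ℂ) with hddef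
  set seg := (fun t : ℝ => z₀ + t • (a - z₀)) '' Set.Ico 0 1 with hsegdef
  have haD : a ∉ D := by
    intro h
    have h2 : a ∉ interior D := ha.2
    rw [hDo.interior_eq] at h2
    exact h2 h
  have hR0 : 0 < R := by
    rw [← hd]; exact dist_pos.mpr (fun h => haD (h ▸ hz₀))
  have hball : ball z₀ R ⊆ D := aux_ball_subset hDo hz₀
  -- segment is inside ball z₀ R
  have hsegball : seg ⊆ ball z₀ R := by
    rintro z ⟨t, ht, rfl⟩
    rw [mem_ball, dist_eq_norm, add_sub_cancel_left, norm_smul]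
    have hna : ‖a - z₀‖ = R := by rw [← hd, dist_eq_norm, norm_sub_rev]
    rw [hna, Real.norm_eq_abs, _root_.abs_of_nonneg ht.1]
    calc t * R < 1 * R := by
          exact mul_lt_mul_of_pos_right ht.2 hR0
    _ = R := one_mul R
  -- NeBot of the filter
  have hane : a ∈ closure seg := by
    have h1 : (nhdsWithin (1:ℝ) (Set.Ico (0:ℝ) 1)).NeBot := by
      apply mem_closure_iff_nhdsWithin_neBot.mp
      rw [closure_Ico (by norm_num : (0:ℝ) ≠ 1)]
      exact ⟨zero_le_one, le_refl 1⟩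
    have hcont : Tendsto (fun t : ℝ => z₀ + t • (a - z₀))
        (nhdsWithin (1:ℝ) (Set.Ico (0:ℝ) 1)) (𝓝 a) := by
      have hc : Continuous (fun t : ℝ => z₀ + t • (a - z₀)) :=
        continuous_const.add (continuous_id.smul continuous_const)
      have h2 := (hc.tendsto 1).mono_left (nhdsWithin_le_nhds (s := Set.Ico (0:ℝ) 1))
      have h3 : z₀ + (1:ℝ) • (a - z₀) = a := by simp
      rwa [h3] at h2
    exact mem_closure_of_tendsto hcont
      (eventually_mem_nhdsWithin.mono fun t ht => mem_image_of_mem _ ht)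
  have hne : (nhdsWithin a seg).NeBot := mem_closure_iff_nhdsWithin_neBot.mp hane
  -- upper bound
  have hub : radiusOfConvergence d ≤ ENNReal.ofReal R := by
    unfold radiusOfConvergence
    apply iSup₂_le
    intro r hr
    by_contra hgt
    push_neg at hgt
    have hRr : R < (r : ℝ) := by
      rw [← ENNReal.ofReal_coe_nnreal] at hgt
      exact ((ENNReal.ofReal_lt_ofReal_iff'.mp hgt).1)
    obtain ⟨C, hC⟩ := hr
    -- the Cauchy power series at radius R/2
    obtain ⟨r₀, hr₀⟩ : ∃ r₀ : NNReal, (r₀ : ℝ) = R / 2 := ⟨⟨R / 2, by positivity⟩, rfl⟩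
    have hr₀0 : 0 < r₀ := by
      rw [← NNReal.coe_pos, hr₀]; positivity
    have hdf : DifferentiableOn ℂ f (closedBall z₀ (r₀ : ℝ)) :=
      hf.mono ((closedBall_subset_ball (by rw [hr₀]; linarith)).trans hball)
    have hp := hdf.hasFPowerSeriesOnBall hr₀0
    set p := cauchyPowerSeries f z₀ r₀ with hpdef
    have hrad : (r : ENNReal) ≤ p.radius := by
      apply p.le_radius_of_bound C
      intro n
      rw [p.norm_apply_eq_norm_coef, aux_coeff hp n]
      exact hC n
    have hr0' : (0 : ENNReal) < r :=
      ENNReal.coe_pos.mpr (NNReal.coe_pos.mp (hR0.trans hRr))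
    have hprad : 0 < p.radius := lt_of_lt_of_le hr0' hrad
    set g : ℂ → ℂ := fun z => p.sum (z - z₀) with hgdef
    have hg : HasFPowerSeriesOnBall g p z₀ p.radius :=
      { r_le := le_rfl
        r_pos := hprad
        hasSum := fun {y} hy => by
          have := (p.hasFPowerSeriesOnBall hprad).hasSum (by simpa using hy)
          simpa [hgdef] using this }
    have hoR : ENNReal.ofReal R ≤ p.radius := by
      refine le_trans ?_ hrad
      rw [← ENNReal.ofReal_coe_nnreal]
      exact ENNReal.ofReal_le_ofReal hRr.le
    have hsub2 : ball z₀ R ⊆ EMetric.ball z₀ p.radius := by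
      rw [← Metric.emetric_ball]
      exact EMetric.ball_subset_ball hoR
    have heq : Set.EqOn f g (ball z₀ R) := by
      apply AnalyticOnNhd.eqOn_of_preconnected_of_eventuallyEq
        ((hf.mono hball).analyticOnNhd isOpen_ball)
        (hg.analyticOnNhd.mono hsub2)
        (convex_ball z₀ R).isPreconnected (mem_ball_self hR0) ?_
      filter_upwards [EMetric.ball_mem_nhds z₀ hp.r_pos] with z hz
      have hz' : z - z₀ ∈ Metric.eball (0 : ℂ) (r₀ : ENNReal) := by
        rw [EMetric.mem_ball, edist_eq_enorm_sub, sub_zero]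
        rw [EMetric.mem_ball] at hz
        rwa [edist_eq_enorm_sub] at hz
      have h1 := hp.sum hz'
      have h2 : z₀ + (z - z₀) = z := by ring
      rw [h2] at h1
      exact h1
    -- g is continuous at a
    have hamem : a ∈ Metric.eball z₀ p.radius := by
      rw [EMetric.mem_ball, edist_dist, dist_comm, hd]
      exact lt_of_lt_of_le hgt hrad
    have hga : ContinuousAt g a := (hg.analyticOnNhd a hamem).continuousAt
    have htend : Tendsto (fun z => ‖(z - a) * f z‖) (nhdsWithin a seg) (𝓝 0) := by
      have h1 : Tendsto (fun z : ℂ => ‖(z - a) * g z‖) (nhdsWithin a seg) (𝓝 0) := by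
        have h2 : ContinuousAt (fun z : ℂ => ‖(z - a) * g z‖) a :=
          ((continuousAt_id.sub continuousAt_const).mul hga).norm
        have h3 := (h2.continuousWithinAt (s := seg)).tendsto
        simpa using h3
      apply h1.congr'
      filter_upwards [self_mem_nhdsWithin] with z hz
      rw [heq (hsegball hz)]
    have : Filter.liminf (fun z => ‖(z - a) * f z‖) (nhdsWithin a seg) = 0 :=
      htend.liminf_eq
    rw [this] at hlim
    exact lt_irrefl 0 hlim
  -- lower bound
  have hlb : ENNReal.ofReal R ≤ radiusOfConvergence d := by
    apply ENNReal.le_of_forall_nnreal_lt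
    intro r hrR
    have hrR' : (r : ℝ) < R := by
      rw [← ENNReal.ofReal_coe_nnreal] at hrR
      exact (ENNReal.ofReal_lt_ofReal_iff hR0).mp hrR
    set t : ℝ := ((r : ℝ) + R) / 2 with htdef
    have ht1 : (r : ℝ) < t := by rw [htdef]; linarith
    have ht2 : t < R := by rw [htdef]; linarith
    have ht0 : 0 < t := lt_of_le_of_lt r.coe_nonneg ht1
    obtain ⟨r₁, hr₁⟩ : ∃ r₁ : NNReal, (r₁ : ℝ) = t := ⟨⟨t, ht0.le⟩, rfl⟩
    have hr₁0 : 0 < r₁ := by rw [← NNReal.coe_pos, hr₁]; exact ht0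
    have hdf₁ : DifferentiableOn ℂ f (closedBall z₀ (r₁ : ℝ)) :=
      hf.mono ((closedBall_subset_ball (by rw [hr₁]; exact ht2)).trans hball)
    have hp₁ := hdf₁.hasFPowerSeriesOnBall hr₁0
    set q := cauchyPowerSeries f z₀ r₁ with hqdef
    have hrq : (r : ENNReal) < q.radius := by
      refine lt_of_lt_of_le ?_ hp₁.r_le
      exact_mod_cast (by rw [← NNReal.coe_lt_coe, hr₁]; exact ht1 : r < r₁)
    obtain ⟨C, hC0, hC⟩ := q.norm_mul_pow_le_of_lt_radius hrq
    unfold radiusOfConvergence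
    refine le_iSup₂ (f := fun (r : NNReal) (_ : ∃ C : ℝ, ∀ n : ℕ, ‖d n‖ * (r : ℝ) ^ n ≤ C)
      => (r : ENNReal)) r ⟨C, fun n => ?_⟩
    have : ‖d n‖ = ‖q n‖ := by
      rw [q.norm_apply_eq_norm_coef, aux_coeff hp₁ n]
    rw [this]
    exact hC n
  exact le_antisymm hub hlb
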